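/- Let ω : [0,1) → [0,∞) be integrable with ω̂(r) = ∫_r^1 ω(s) ds. Suppose there exists λ > 0 and C > 0 such that ∫_𝔻 ω(|z|) dA(z)/|1 - ξ̄ z|^{λ+1} ≤ C ω̂(|ξ|)/(1-|ξ|)^λ for all ξ ∈ 𝔻. Then there exists C' > 0 such that ω̂(r)/(1-r)^λ ≤ C' ω̂(t)/(1-t)^λ for all 0 ≤ r ≤ t < 1. -/

import Mathlib

open MeasureTheory
open Real Set
open scoped ENNReal


theorem lintegral_comp_polarCoord_symm' (f : ℝ × ℝ → ENNReal) :
    (∫⁻ p in polarCoord.target, ENNReal.ofReal p.1 * f (polarCoord.symm p)) = ∫⁻ p, f p := by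
  set B : ℝ × ℝ → ℝ × ℝ →L[ℝ] ℝ × ℝ := fun p =>
    LinearMap.toContinuousLinearMap (Matrix.toLin (Module.Basis.finTwoProd ℝ) (Module.Basis.finTwoProd ℝ)
      !![Real.cos p.2, -p.1 * Real.sin p.2; Real.sin p.2, p.1 * Real.cos p.2])
  have A : ∀ p ∈ polarCoord.target, HasFDerivWithinAt polarCoord.symm (B p) polarCoord.target p :=
    fun p _ => (hasFDerivAt_polarCoord_symm p).hasFDerivWithinAt
  have B_det : ∀ p, (B p).det = p.1 := by
    intro p
    conv_rhs => rw [← one_mul p.1, ← Real.cos_sq_add_sin_sq p.2]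
    simp only [B, neg_mul, LinearMap.det_toContinuousLinearMap, LinearMap.det_toLin,
      Matrix.det_fin_two_of, sub_neg_eq_add]
    ring
  symm
  calc
    ∫⁻ p, f p = ∫⁻ p in polarCoord.source, f p := by
      rw [← setLIntegral_univ]
      exact setLIntegral_congr polarCoord_source_ae_eq_univ.symm
    _ = ∫⁻ p in polarCoord.symm '' polarCoord.target, f p := by
      rw [polarCoord.symm_image_target_eq_source]
    _ = ∫⁻ p in polarCoord.target, ENNReal.ofReal |(B p).det| * f (polarCoord.symm p) := by
      exact lintegral_image_eq_lintegral_abs_det_fderiv_mul volume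
        polarCoord.open_target.measurableSet A polarCoord.symm.injOn f
    _ = ∫⁻ p in polarCoord.target, ENNReal.ofReal p.1 * f (polarCoord.symm p) := by
      apply setLIntegral_congr_fun polarCoord.open_target.measurableSet
      intro x hx
      beta_reduce
      rw [B_det, abs_of_pos hx.1]

theorem Complex.lintegral_comp_polarCoord_symm' (f : ℂ → ENNReal) :
    (∫⁻ p in polarCoord.target, ENNReal.ofReal p.1 * f (Complex.polarCoord.symm p)) = ∫⁻ z, f z := by
  rw [← (Complex.volume_preserving_equiv_real_prod.symm).lintegral_comp_emb
    Complex.measurableEquivRealProd.symm.measurableEmbedding,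
    ← _root_.lintegral_comp_polarCoord_symm' (fun p => f (Complex.measurableEquivRealProd.symm p))]
  rfl

/-- preimage of a null set under `Complex.abs` is null. -/
theorem abs_preimage_null {N : Set ℝ} (hN : volume N = 0) :
    volume ((fun z : ℂ => ‖z‖) ⁻¹' N) = 0 := by
  obtain ⟨N', hsub, hmeasN, hN'⟩ := exists_measurable_superset_of_null hN
  have hS : MeasurableSet ((fun z : ℂ => ‖z‖) ⁻¹' N') := continuous_norm.measurable hmeasN
  have key : volume ((fun z : ℂ => ‖z‖) ⁻¹' N') = 0 := by
    rw [← lintegral_indicator_one hS, ← Complex.lintegral_comp_polarCoord_symm']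
    have hnull : volume {p : ℝ × ℝ | |p.1| ∈ N'} = 0 := by
      have he : {p : ℝ × ℝ | |p.1| ∈ N'} = ((fun x : ℝ => |x|) ⁻¹' N') ×ˢ Set.univ := by
        ext p; simp [Set.mem_prod]
      have habs : volume ((fun x : ℝ => |x|) ⁻¹' N') = 0 := by
        have hsub2 : (fun x : ℝ => |x|) ⁻¹' N' ⊆ N' ∪ (Neg.neg ⁻¹' N') := by
          intro x hx
          rcases le_or_gt 0 x with hx0 | hx0
          · left; simpa [abs_of_nonneg hx0] using hx
          · right; simpa [abs_of_neg hx0] using hx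
        refine measure_mono_null hsub2 ?_
        exact measure_union_null hN' (by rwa [Measure.measure_preimage_neg])
      rw [he, Measure.volume_eq_prod, Measure.prod_prod, habs, zero_mul]
    have hae : (fun p : ℝ × ℝ => ENNReal.ofReal p.1 *
        ((fun z : ℂ => ‖z‖) ⁻¹' N').indicator 1 (Complex.polarCoord.symm p))
        =ᵐ[volume.restrict polarCoord.target] 0 := by
      refine ae_restrict_of_ae ?_
      have : {p : ℝ × ℝ | ¬ (ENNReal.ofReal p.1 *
          ((fun z : ℂ => ‖z‖) ⁻¹' N').indicator 1 (Complex.polarCoord.symm p) = 0)}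
          ⊆ {p : ℝ × ℝ | |p.1| ∈ N'} := by
        intro p hp
        by_contra hmem
        apply hp
        have : Complex.polarCoord.symm p ∉ (fun z : ℂ => ‖z‖) ⁻¹' N' := by
          simpa [Complex.norm_polarCoord_symm] using hmem
        rw [Set.indicator_of_notMem this, mul_zero]
      exact measure_mono_null this hnull
    rw [lintegral_congr_ae hae]
    simp
  exact measure_mono_null (Set.preimage_mono hsub) key

theorem sector_integral (g : ℝ → ℝ) {r δ : ℝ} (hr : 0 ≤ r) (hδ : 0 < δ) (hδπ : δ ≤ π) :
    ∫ z in {z : ℂ | ‖z‖ ∈ Set.Ioo r 1 ∧ Complex.arg z ∈ Set.Ioo (-δ) δ},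
      g (‖z‖) = (2 * δ) * ∫ s in Set.Ioo r 1, s * g s := by
  set S : Set ℂ := {z : ℂ | ‖z‖ ∈ Set.Ioo r 1 ∧ Complex.arg z ∈ Set.Ioo (-δ) δ} with hSdef
  have hS : MeasurableSet S :=
    (continuous_norm.measurable measurableSet_Ioo).inter
      (Complex.measurable_arg measurableSet_Ioo)
  rw [← integral_indicator hS, ← Complex.integral_comp_polarCoord_symm]
  have hptwise : ∀ p ∈ polarCoord.target,
      p.1 • (S.indicator (fun z => g (‖z‖)) (Complex.polarCoord.symm p))
        = (Set.Ioo r 1 ×ˢ Set.Ioo (-δ) δ).indicator (fun q : ℝ × ℝ => q.1 * g q.1) p := by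
    intro p hp
    have habs : ‖Complex.polarCoord.symm p‖ = p.1 := by
      rw [Complex.norm_polarCoord_symm, abs_of_pos hp.1]
    have harg : Complex.arg (Complex.polarCoord.symm p) = p.2 := by
      have h2 := Complex.polarCoord.right_inv hp
      rw [Complex.polarCoord_apply] at h2
      exact congrArg Prod.snd h2
    by_cases hmem : p ∈ Set.Ioo r 1 ×ˢ Set.Ioo (-δ) δ
    · rw [Set.indicator_of_mem hmem, Set.indicator_of_mem, habs, smul_eq_mul]
      exact ⟨habs ▸ hmem.1, harg ▸ hmem.2⟩
    · rw [Set.indicator_of_notMem hmem, Set.indicator_of_notMem, smul_zero]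
      intro hzS
      exact hmem ⟨habs ▸ hzS.1, harg ▸ hzS.2⟩
  rw [setIntegral_congr_fun polarCoord.open_target.measurableSet hptwise]
  rw [setIntegral_indicator (measurableSet_Ioo.prod measurableSet_Ioo)]
  have hinter : polarCoord.target ∩ (Set.Ioo r 1 ×ˢ Set.Ioo (-δ) δ)
      = Set.Ioo r 1 ×ˢ Set.Ioo (-δ) δ := by
    apply Set.inter_eq_self_of_subset_right
    rintro ⟨a, b⟩ ⟨ha, hb⟩
    exact ⟨lt_of_le_of_lt hr ha.1, ⟨lt_of_le_of_lt (by linarith) hb.1, lt_of_lt_of_le hb.2 hδπ⟩⟩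
  rw [hinter, Measure.volume_eq_prod]
  have : ∫ p : ℝ × ℝ in Set.Ioo r 1 ×ˢ Set.Ioo (-δ) δ, p.1 * g p.1
      ∂((volume : Measure ℝ).prod volume)
      = ∫ p : ℝ × ℝ in Set.Ioo r 1 ×ˢ Set.Ioo (-δ) δ,
        (fun s => s * g s) p.1 * (fun _ => (1:ℝ)) p.2 ∂((volume : Measure ℝ).prod volume) := by
    simp
  have h3 : (∫ p : ℝ × ℝ in Set.Ioo r 1 ×ˢ Set.Ioo (-δ) δ,
      (fun s => s * g s) p.1 * (fun _ => (1:ℝ)) p.2 ∂((volume : Measure ℝ).prod volume))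
      = (∫ s in Set.Ioo r 1, s * g s) * (∫ _ in Set.Ioo (-δ) δ, (1:ℝ)) :=
    setIntegral_prod_mul (μ := (volume : Measure ℝ)) (ν := (volume : Measure ℝ))
      (fun s : ℝ => s * g s) (fun _ : ℝ => (1:ℝ)) _ _
  rw [this, h3]
  simp only [integral_const, smul_eq_mul, mul_one, Measure.restrict_apply_univ]
  rw [measureReal_restrict_apply_univ, Real.volume_real_Ioo_of_le (by linarith)]
  ring

theorem radial_integrableOn (g : ℝ → ℝ) (hg : Measurable g) (hg0 : ∀ s, 0 ≤ g s)
    (hint : IntegrableOn g (Set.Ico (0:ℝ) 1)) :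
    IntegrableOn (fun z => g (‖z‖)) (Metric.ball (0:ℂ) 1) := by
  constructor
  · exact ((hg.comp continuous_norm.measurable).aestronglyMeasurable)
  · rw [hasFiniteIntegral_iff_norm]
    have heq : ∀ z : ℂ, ENNReal.ofReal ‖g (‖z‖)‖ = ENNReal.ofReal (g (‖z‖)) :=
      fun z => by rw [Real.norm_eq_abs, abs_of_nonneg (hg0 _)]
    calc ∫⁻ z in Metric.ball (0:ℂ) 1, ENNReal.ofReal ‖g (‖z‖)‖
        = ∫⁻ z, (Metric.ball (0:ℂ) 1).indicator (fun z => ENNReal.ofReal (g (‖z‖))) z := by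
          rw [lintegral_indicator measurableSet_ball]
          exact lintegral_congr fun z => heq z
      _ = ∫⁻ p in polarCoord.target, ENNReal.ofReal p.1 *
            (Metric.ball (0:ℂ) 1).indicator (fun z => ENNReal.ofReal (g (‖z‖)))
              (Complex.polarCoord.symm p) := (Complex.lintegral_comp_polarCoord_symm' _).symm
      _ ≤ ∫⁻ p in polarCoord.target,
            (Set.Ioo (0:ℝ) 1 ×ˢ Set.Ioo (-π) π).indicator
              (fun q : ℝ × ℝ => ENNReal.ofReal (g q.1)) p := by
          apply setLIntegral_mono
          · exact (hg.comp measurable_fst).ennreal_ofReal.indicator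
              (measurableSet_Ioo.prod measurableSet_Ioo)
          · intro p hp
            by_cases hb : Complex.polarCoord.symm p ∈ Metric.ball (0:ℂ) 1
            · have habs : ‖Complex.polarCoord.symm p‖ = p.1 := by
                rw [Complex.norm_polarCoord_symm, abs_of_pos hp.1]
              have hp1 : p.1 < 1 := by
                have := Metric.mem_ball.1 hb
                rw [dist_zero_right, habs] at this
                exact this
              have hmem : p ∈ Set.Ioo (0:ℝ) 1 ×ˢ Set.Ioo (-π) π := ⟨⟨hp.1, hp1⟩, hp.2⟩
              rw [Set.indicator_of_mem hb, Set.indicator_of_mem hmem, habs]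
              calc ENNReal.ofReal p.1 * ENNReal.ofReal (g p.1)
                  ≤ 1 * ENNReal.ofReal (g p.1) :=
                    mul_le_mul_left (ENNReal.ofReal_le_one.2 hp1.le) _
                _ = ENNReal.ofReal (g p.1) := one_mul _
            · rw [Set.indicator_of_notMem hb, mul_zero]
              exact zero_le
      _ ≤ ∫⁻ p, (Set.Ioo (0:ℝ) 1 ×ˢ Set.Ioo (-π) π).indicator
              (fun q : ℝ × ℝ => ENNReal.ofReal (g q.1)) p := setLIntegral_le_lintegral _ _
      _ = ∫⁻ p in Set.Ioo (0:ℝ) 1 ×ˢ Set.Ioo (-π) π, ENNReal.ofReal (g p.1) := by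
          rw [lintegral_indicator (measurableSet_Ioo.prod measurableSet_Ioo)]
      _ = (∫⁻ s in Set.Ioo (0:ℝ) 1, ENNReal.ofReal (g s)) * ENNReal.ofReal (2 * π) := by
          rw [Measure.volume_eq_prod, ← Measure.prod_restrict]
          have h2 : ∀ p : ℝ × ℝ, ENNReal.ofReal (g p.1)
              = (fun s => ENNReal.ofReal (g s)) p.1 * (fun _ => (1:ℝ≥0∞)) p.2 := by
            intro p; simp
          rw [lintegral_congr h2, lintegral_prod_mul (hg.ennreal_ofReal.aemeasurable)
            aemeasurable_const]
          simp only [Real.volume_Ioo, lintegral_const, Measure.restrict_apply_univ, one_mul,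
            sub_neg_eq_add]
          rw [two_mul]
      _ < ⊤ := by
          apply ENNReal.mul_lt_top _ ENNReal.ofReal_lt_top
          have h1 : IntegrableOn g (Set.Ioo (0:ℝ) 1) :=
            hint.mono_set Set.Ioo_subset_Ico_self
          have := h1.2
          rw [hasFiniteIntegral_iff_norm] at this
          refine lt_of_le_of_lt (le_of_eq ?_) this
          exact lintegral_congr fun s => (by rw [Real.norm_eq_abs, abs_of_nonneg (hg0 _)])

theorem abs_exp_mul_I_sub_one_le (θ : ℝ) :
    ‖Complex.exp (θ * Complex.I) - 1‖ ≤ |θ| := by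
  have h1 : ‖Complex.exp (θ * Complex.I) - 1‖ ^ 2 = 2 - 2 * Real.cos θ := by
    rw [← Complex.normSq_eq_norm_sq, Complex.exp_mul_I]
    simp [Complex.normSq_apply, Complex.cos_ofReal_re, Complex.sin_ofReal_re]
    have hc : ((Complex.cos θ + Complex.sin θ * Complex.I - 1).re) = Real.cos θ - 1 := by
      simp [Complex.cos_ofReal_re]
    linear_combination (Real.sin_sq_add_cos_sq θ)
  have h2 := Real.one_sub_sq_div_two_le_cos (x := θ)
  nlinarith [norm_nonneg (Complex.exp (θ * Complex.I) - 1), abs_nonneg θ, sq_abs θ]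

set_option maxHeartbeats 2000000 in
theorem core_thm (ω : ℝ → ℝ) (hmeas : Measurable ω) (hω : ∀ s, 0 ≤ ω s)
    (hint : IntegrableOn ω (Set.Ico (0:ℝ) 1))
    (lam C : ℝ) (hlam : 0 < lam) (hC : 0 < C)
    (h : ∀ ξ ∈ Metric.ball (0:ℂ) 1,
      (∫ z in Metric.ball (0:ℂ) 1,
          ω (‖z‖) / ‖1 - (starRingEnd ℂ) ξ * z‖ ^ (lam + 1)) ≤
        C * ((∫ s in (‖ξ‖)..1, ω s) / (1 - ‖ξ‖) ^ lam)) :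
    ∃ C' : ℝ, 0 < C' ∧ ∀ r t : ℝ, 0 ≤ r → r ≤ t → t < 1 →
      (∫ s in r..1, ω s) / (1 - r) ^ lam ≤ C' * ((∫ s in t..1, ω s) / (1 - t) ^ lam) := by
  set wh : ℝ → ℝ := fun r => ∫ s in Set.Ioo r 1, ω s with hwh
  have hconv : ∀ r : ℝ, r ≤ 1 → (∫ s in r..1, ω s) = wh r := by
    intro r hr
    rw [intervalIntegral.integral_of_le hr, integral_Ioc_eq_integral_Ioo]
  have hIoo : ∀ r : ℝ, 0 ≤ r → IntegrableOn ω (Set.Ioo r 1) := fun r hr =>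
    hint.mono_set (fun x hx => ⟨le_of_lt (lt_of_le_of_lt hr hx.1), hx.2⟩)
  have hsω_int : ∀ r : ℝ, 0 ≤ r → IntegrableOn (fun s => s * ω s) (Set.Ioo r 1) := by
    intro r hr
    refine Integrable.mono (hIoo r hr) ((measurable_id.mul hmeas).aestronglyMeasurable) ?_
    filter_upwards [ae_restrict_mem measurableSet_Ioo] with s hs
    rw [Real.norm_eq_abs, Real.norm_eq_abs, abs_mul]
    have h1 : |s| ≤ 1 := by
      rw [abs_of_nonneg (le_trans hr hs.1.le)]; exact hs.2.le
    nlinarith [abs_nonneg (ω s), abs_nonneg s]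
  have whnn : ∀ r : ℝ, 0 ≤ wh r := fun r =>
    setIntegral_nonneg measurableSet_Ioo (fun s _ => hω s)
  have whmono : ∀ r t : ℝ, 0 ≤ r → r ≤ t → wh t ≤ wh r := by
    intro r t hr hrt
    refine setIntegral_mono_set (hIoo r hr) ?_ ?_
    · filter_upwards with s using hω s
    · exact HasSubset.Subset.eventuallyLE (Set.Ioo_subset_Ioo hrt le_rfl)
  have F_int : IntegrableOn (fun z => ω (‖z‖)) (Metric.ball (0:ℂ) 1) :=
    radial_integrableOn ω hmeas hω hint
  -- the key lower bound
  have key : ∀ r t : ℝ, 0 ≤ r → r ≤ t → t < 1 →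
      (2 * (1 - r)) * ∫ s in Set.Ioo r 1, s * ω s ≤
        (3 * (1 - r)) ^ (lam + 1) * (C * (wh t / (1 - t) ^ lam)) := by
    intro r t hr hrt ht
    have hr1 : r < 1 := lt_of_le_of_lt hrt ht
    have ht0 : 0 ≤ t := le_trans hr hrt
    have hE : (0:ℝ) < (3 * (1 - r)) ^ (lam + 1) :=
      Real.rpow_pos_of_pos (by linarith) _
    set E := (3 * (1 - r)) ^ (lam + 1) with hEdef
    set S : Set ℂ := {z : ℂ | ‖z‖ ∈ Set.Ioo r 1 ∧
      Complex.arg z ∈ Set.Ioo (-(1-r)) (1-r)} with hSdef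
    have hSmeas : MeasurableSet S :=
      (continuous_norm.measurable measurableSet_Ioo).inter
        (Complex.measurable_arg measurableSet_Ioo)
    have hSsub : S ⊆ Metric.ball (0:ℂ) 1 := by
      intro z hz
      rw [Metric.mem_ball, dist_zero_right]
      exact hz.1.2
    -- pointwise bound
    have hpt : ∀ z ∈ Metric.ball (0:ℂ) 1,
        S.indicator (fun z => ω (‖z‖) / E) z ≤
          ω (‖z‖) / ‖1 - (t:ℂ) * z‖ ^ (lam + 1) := by
      intro z hz
      have hzabs : ‖z‖ < 1 := by
        rw [Metric.mem_ball, dist_zero_right] at hz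
        exact hz
      have hD0 : (0:ℝ) < ‖1 - (t:ℂ) * z‖ := by
        have h1 : ‖(1:ℂ)‖ - ‖(t:ℂ) * z‖ ≤ ‖1 - (t:ℂ) * z‖ := norm_sub_norm_le _ _
        rw [norm_one, norm_mul, Complex.norm_real, Real.norm_eq_abs, abs_of_nonneg ht0] at h1
        have : t * ‖z‖ < 1 := by nlinarith [norm_nonneg z]
        calc (0:ℝ) < 1 - t * ‖z‖ := by linarith
        _ ≤ _ := h1
      by_cases hzS : z ∈ S
      · rw [Set.indicator_of_mem hzS]
        have hub : ‖1 - (t:ℂ) * z‖ ≤ 3 * (1 - r) := by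
          obtain ⟨⟨hs1, hs2⟩, hθ1, hθ2⟩ := hzS
          set s := ‖z‖
          set θ := Complex.arg z
          have hzeq : (s:ℂ) * Complex.exp (θ * Complex.I) = z :=
            Complex.norm_mul_exp_arg_mul_I z
          have hsplit : (1 : ℂ) - (t:ℂ) * z =
              ((1 - t * s : ℝ) : ℂ) + (t:ℂ) * ((s:ℂ) - z) := by
            push_cast
            ring
          have habs1 : ‖(s:ℂ) - z‖ ≤ s * (1 - r) := by
            have : (s:ℂ) - z = (s:ℂ) * (1 - Complex.exp (θ * Complex.I)) := by
              rw [← hzeq]; ring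
            rw [this, norm_mul, Complex.norm_real, Real.norm_eq_abs,
              abs_of_nonneg (norm_nonneg z)]
            have h2 : ‖1 - Complex.exp (θ * Complex.I)‖ ≤ 1 - r := by
              rw [← norm_neg, neg_sub]
              refine le_trans (abs_exp_mul_I_sub_one_le θ) ?_
              rw [abs_le]
              exact ⟨by linarith, by linarith⟩
            exact mul_le_mul_of_nonneg_left h2 (norm_nonneg z)
          have hts : r * r ≤ t * s := mul_le_mul hrt hs1.le hr ht0
          calc ‖1 - (t:ℂ) * z‖
              ≤ ‖((1 - t * s : ℝ) : ℂ)‖ + ‖(t:ℂ) * ((s:ℂ) - z)‖ := by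
                rw [hsplit]; exact norm_add_le _ _
            _ ≤ (1 - t * s) + t * (s * (1 - r)) := by
                rw [Complex.norm_real, Real.norm_eq_abs, norm_mul, Complex.norm_real, Real.norm_eq_abs, abs_of_nonneg ht0]
                have hts1 : t * s < 1 := by nlinarith [norm_nonneg z]
                rw [abs_of_nonneg (by linarith : (0:ℝ) ≤ 1 - t * s)]
                exact add_le_add le_rfl (mul_le_mul_of_nonneg_left habs1 ht0)
            _ ≤ 3 * (1 - r) := by
                have hts1 : t * s ≤ 1 := by nlinarith [norm_nonneg z]
                have h1 : 1 - t * s ≤ 2 * (1 - r) := by nlinarith [sq_nonneg (1 - r)]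
                have h2 : t * (s * (1 - r)) ≤ 1 - r := by
                  have := mul_le_mul_of_nonneg_right hts1 (by linarith : (0:ℝ) ≤ 1 - r)
                  nlinarith
                linarith
        have hDE : ‖1 - (t:ℂ) * z‖ ^ (lam + 1) ≤ E := by
          exact Real.rpow_le_rpow (norm_nonneg _) hub (by linarith)
        have hDpos : (0:ℝ) < ‖1 - (t:ℂ) * z‖ ^ (lam + 1) :=
          Real.rpow_pos_of_pos hD0 _
        exact div_le_div_of_nonneg_left (hω _) hDpos hDE
      · rw [Set.indicator_of_notMem hzS]
        exact div_nonneg (hω _) (Real.rpow_nonneg (norm_nonneg _) _)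
    -- integrate the pointwise bound
    have hker_int : IntegrableOn
        (fun z => ω (‖z‖) / ‖1 - (t:ℂ) * z‖ ^ (lam + 1))
        (Metric.ball (0:ℂ) 1) := by
      refine (F_int.const_mul ((1 - t) ^ (lam + 1))⁻¹).mono ?_ ?_
      · refine ((hmeas.comp continuous_norm.measurable).div ?_).aestronglyMeasurable
        have h1 : Continuous fun z : ℂ => ‖1 - (t:ℂ) * z‖ :=
          continuous_norm.comp (continuous_const.sub (continuous_const.mul continuous_id))
        have h2 : Continuous fun x : ℝ => x ^ (lam + 1) :=
          continuous_iff_continuousAt.2 fun x =>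
            Real.continuousAt_rpow_const x _ (Or.inr (by linarith))
        exact (h2.comp h1).measurable
      · filter_upwards [ae_restrict_mem measurableSet_ball] with z hz
        have hzabs : ‖z‖ < 1 := by
          rw [Metric.mem_ball, dist_zero_right] at hz; exact hz
        have hD1 : (1 - t) ≤ ‖1 - (t:ℂ) * z‖ := by
          have h1 : ‖(1:ℂ)‖ - ‖(t:ℂ) * z‖ ≤ ‖1 - (t:ℂ) * z‖ := norm_sub_norm_le _ _
          rw [norm_one, norm_mul, Complex.norm_real, Real.norm_eq_abs, abs_of_nonneg ht0] at h1
          have : t * ‖z‖ ≤ t := by nlinarith [norm_nonneg z]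
          linarith
        have hDpos' : (0:ℝ) < (1 - t) ^ (lam + 1) :=
          Real.rpow_pos_of_pos (by linarith) _
        have hDle : (1 - t) ^ (lam + 1) ≤ ‖1 - (t:ℂ) * z‖ ^ (lam + 1) :=
          Real.rpow_le_rpow (by linarith) hD1 (by linarith)
        rw [Real.norm_eq_abs, Real.norm_eq_abs]
        rw [abs_of_nonneg (div_nonneg (hω _) (Real.rpow_nonneg (norm_nonneg _) _))]
        rw [abs_of_nonneg (mul_nonneg (inv_nonneg.2 (Real.rpow_nonneg (by linarith) _)) (hω _))]
        rw [div_eq_mul_inv, mul_comm]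
        exact mul_le_mul_of_nonneg_right (by
          exact inv_anti₀ hDpos' hDle) (hω _)
    have hind_int : IntegrableOn (S.indicator (fun z => ω (‖z‖) / E))
        (Metric.ball (0:ℂ) 1) := by
      have : IntegrableOn (fun z => ω (‖z‖) / E) (Metric.ball (0:ℂ) 1) := by
        simpa [div_eq_mul_inv, mul_comm, IntegrableOn] using F_int.const_mul E⁻¹
      exact this.indicator hSmeas
    have hmono := setIntegral_mono_on hind_int hker_int measurableSet_ball hpt
    -- compute the left integral
    have hleft : ∫ z in Metric.ball (0:ℂ) 1, S.indicator (fun z => ω (‖z‖) / E) z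
        = (2 * (1 - r)) * ((∫ s in Set.Ioo r 1, s * ω s) / E) := by
      rw [setIntegral_indicator hSmeas, Set.inter_eq_self_of_subset_right hSsub, hSdef]
      have hsec := sector_integral (fun s => ω s / E) hr (by linarith : (0:ℝ) < 1 - r)
        (by linarith [Real.pi_gt_three] : 1 - r ≤ π)
      beta_reduce at hsec
      rw [hsec]
      congr 1
      calc ∫ s in Set.Ioo r 1, s * (ω s / E)
          = ∫ s in Set.Ioo r 1, (s * ω s) * E⁻¹ :=
            integral_congr_ae (Filter.Eventually.of_forall fun s => by ring)
        _ = (∫ s in Set.Ioo r 1, s * ω s) * E⁻¹ := integral_mul_const _ _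
        _ = (∫ s in Set.Ioo r 1, s * ω s) / E := (div_eq_mul_inv _ _).symm
    -- h applied at ξ = t
    have htmem : (t:ℂ) ∈ Metric.ball (0:ℂ) 1 := by
      rw [Metric.mem_ball, dist_zero_right, Complex.norm_real, Real.norm_eq_abs,
        abs_of_nonneg ht0]
      exact ht
    have hh := h (t:ℂ) htmem
    rw [Complex.conj_ofReal] at hh
    rw [Complex.norm_real, Real.norm_eq_abs, abs_of_nonneg ht0, hconv t ht.le] at hh
    have hchain : (2 * (1 - r)) * ((∫ s in Set.Ioo r 1, s * ω s) / E)
        ≤ C * (wh t / (1 - t) ^ lam) := by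
      rw [← hleft]
      exact le_trans hmono hh
    -- multiply through by E
    have := mul_le_mul_of_nonneg_left hchain hE.le
    calc (2 * (1 - r)) * ∫ s in Set.Ioo r 1, s * ω s
        = E * ((2 * (1 - r)) * ((∫ s in Set.Ioo r 1, s * ω s) / E)) := by
          field_simp
      _ ≤ E * (C * (wh t / (1 - t) ^ lam)) := this

  -- integral of s*ω dominates wh/2 for r ≥ 1/2
  have hJgen : ∀ u : ℝ, (1/2:ℝ) ≤ u → wh u / 2 ≤ ∫ s in Set.Ioo u 1, s * ω s := by
    intro u hu
    have h0u : (0:ℝ) ≤ u := by linarith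
    have hmono2 : ∫ s in Set.Ioo u 1, (1/2) * ω s ≤ ∫ s in Set.Ioo u 1, s * ω s := by
      refine setIntegral_mono_on ((hIoo u h0u).const_mul (1/2)) (hsω_int u h0u)
        measurableSet_Ioo ?_
      intro s hs
      exact mul_le_mul_of_nonneg_right (by linarith [hs.1] : (1/2:ℝ) ≤ s) (hω s)
    rw [integral_const_mul] at hmono2
    linarith
  by_cases hA : (∫ s in Set.Ioo (0:ℝ) 1, s * ω s) = 0
  · -- trivial case : ω vanishes a.e.
    have hae : (fun s => s * ω s) =ᵐ[volume.restrict (Set.Ioo (0:ℝ) 1)] 0 := by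
      refine (integral_eq_zero_iff_of_nonneg_ae ?_ (hsω_int 0 le_rfl)).1 hA
      filter_upwards [ae_restrict_mem measurableSet_Ioo] with s hs
      exact mul_nonneg hs.1.le (hω s)
    have hωae : ω =ᵐ[volume.restrict (Set.Ioo (0:ℝ) 1)] 0 := by
      filter_upwards [hae, ae_restrict_mem measurableSet_Ioo] with s h1 h2
      have h3 : s * ω s = 0 := h1
      exact (mul_eq_zero.1 h3).resolve_left (ne_of_gt h2.1)
    have hwh0 : ∀ r : ℝ, 0 ≤ r → wh r = 0 := by
      intro r hr
      have hsub : Set.Ioo r 1 ⊆ Set.Ioo 0 1 := fun x hx => ⟨lt_of_le_of_lt hr hx.1, hx.2⟩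
      have hae2 : ω =ᵐ[volume.restrict (Set.Ioo r 1)] 0 :=
        ae_restrict_of_ae_restrict_of_subset hsub hωae
      calc wh r = ∫ s in Set.Ioo r 1, (0:ℝ) := integral_congr_ae hae2
        _ = 0 := integral_zero _ _
    refine ⟨1, one_pos, fun r t hr hrt ht => ?_⟩
    rw [hconv r (by linarith), hconv t ht.le, hwh0 r hr, hwh0 t (le_trans hr hrt)]
    simp
  · -- main case
    have hA0 : (0:ℝ) ≤ ∫ s in Set.Ioo (0:ℝ) 1, s * ω s :=
      setIntegral_nonneg measurableSet_Ioo fun s hs => mul_nonneg hs.1.le (hω s)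
    have hApos : (0:ℝ) < ∫ s in Set.Ioo (0:ℝ) 1, s * ω s := lt_of_le_of_ne hA0 (Ne.symm hA)
    have hwhpos : ∀ u : ℝ, 0 ≤ u → u < 1 → 0 < wh u := by
      intro u hu hu1
      by_contra hle
      push_neg at hle
      have hu0 : wh u = 0 := le_antisymm hle (whnn u)
      have hk := key 0 u le_rfl hu hu1
      rw [hu0] at hk
      simp only [zero_div, mul_zero] at hk
      norm_num at hk
      linarith
    have hw2pos : 0 < wh (1/2) := hwhpos _ (by norm_num) (by norm_num)
    have h3pos : (0:ℝ) < (3:ℝ) ^ (lam + 1) := Real.rpow_pos_of_pos (by norm_num) _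
    set m := min (wh (1/2)) ((wh (1/2) / 2) / ((3:ℝ) ^ (lam + 1) * C)) with hm
    have hmpos : 0 < m :=
      lt_min hw2pos (div_pos (by linarith) (mul_pos h3pos hC))
    have hgt_lb : ∀ u : ℝ, 0 ≤ u → u < 1 → m ≤ wh u / (1 - u) ^ lam := by
      intro u hu0 hu1
      rcases le_or_gt (1/2 : ℝ) u with hhalf | hhalf
      · refine le_trans (min_le_right _ _) ?_
        have hk := key (1/2) u (by norm_num) hhalf hu1
        have hgnn : 0 ≤ wh u / (1 - u) ^ lam :=
          div_nonneg (whnn u) (Real.rpow_nonneg (by linarith) _)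
        have hJ := hJgen (1/2) le_rfl
        have hpowle : ((3:ℝ) * (1 - 1/2)) ^ (lam + 1) ≤ (3:ℝ) ^ (lam + 1) :=
          Real.rpow_le_rpow (by norm_num) (by norm_num) (by linarith)
        rw [div_le_iff₀ (mul_pos h3pos hC)]
        have h6 : (2 * (1 - (1/2:ℝ))) * ∫ s in Set.Ioo (1/2:ℝ) 1, s * ω s
            ≤ (3:ℝ) ^ (lam + 1) * (C * (wh u / (1 - u) ^ lam)) := by
          refine le_trans hk ?_
          exact mul_le_mul_of_nonneg_right hpowle (mul_nonneg hC.le hgnn)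
        have h7 : wh (1/2) / 2 ≤ ∫ s in Set.Ioo (1/2:ℝ) 1, s * ω s := hJ
        nlinarith [h6, h7]
      · refine le_trans (min_le_left _ _) ?_
        have h1 : wh (1/2) ≤ wh u := whmono u (1/2) hu0 hhalf.le
        have h2 : (1 - u) ^ lam ≤ 1 :=
          Real.rpow_le_one (by linarith) (by linarith) hlam.le
        have h3 : (0:ℝ) < (1 - u) ^ lam := Real.rpow_pos_of_pos (by linarith) _
        rw [le_div_iff₀ h3]
        nlinarith [whnn u, hw2pos]
    set M := wh 0 / ((1/2:ℝ)) ^ lam with hM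
    have hMnn : 0 ≤ M := div_nonneg (whnn 0) (Real.rpow_nonneg (by norm_num) _)
    refine ⟨max ((3:ℝ) ^ (lam + 1) * C) (M / m),
      lt_of_lt_of_le (mul_pos h3pos hC) (le_max_left _ _), ?_⟩
    intro r t hr hrt ht
    rw [hconv r (by linarith), hconv t ht.le]
    have hgnn : 0 ≤ wh t / (1 - t) ^ lam :=
      div_nonneg (whnn t) (Real.rpow_nonneg (by linarith) _)
    rcases le_or_gt (1/2 : ℝ) r with hhalf | hhalf
    · have hk := key r t hr hrt ht
      have hr1 : r < 1 := lt_of_le_of_lt hrt ht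
      have hsplitpow : (3 * (1 - r)) ^ (lam + 1)
          = 3 ^ (lam + 1) * ((1 - r) ^ lam * (1 - r)) := by
        rw [Real.mul_rpow (by norm_num) (by linarith),
          Real.rpow_add (by linarith : (0:ℝ) < 1 - r) lam 1, Real.rpow_one]
      have hchain : (1 - r) * wh r
          ≤ (1 - r) * ((3 ^ (lam + 1) * C) * ((wh t / (1 - t) ^ lam) * (1 - r) ^ lam)) := by
        calc (1 - r) * wh r = (2 * (1 - r)) * (wh r / 2) := by ring
          _ ≤ (2 * (1 - r)) * ∫ s in Set.Ioo r 1, s * ω s :=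
            mul_le_mul_of_nonneg_left (hJgen r hhalf) (by linarith)
          _ ≤ (3 * (1 - r)) ^ (lam + 1) * (C * (wh t / (1 - t) ^ lam)) := hk
          _ = (1 - r) * ((3 ^ (lam + 1) * C) * ((wh t / (1 - t) ^ lam) * (1 - r) ^ lam)) := by
            rw [hsplitpow]; ring
      have h5 : wh r ≤ (3 ^ (lam + 1) * C) * ((wh t / (1 - t) ^ lam) * (1 - r) ^ lam) :=
        le_of_mul_le_mul_left hchain (by linarith)
      rw [div_le_iff₀ (Real.rpow_pos_of_pos (by linarith : (0:ℝ) < 1 - r) lam)]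
      calc wh r ≤ (3 ^ (lam + 1) * C) * ((wh t / (1 - t) ^ lam) * (1 - r) ^ lam) := h5
        _ ≤ max ((3:ℝ) ^ (lam + 1) * C) (M / m) * ((wh t / (1 - t) ^ lam) * (1 - r) ^ lam) :=
          mul_le_mul_of_nonneg_right (le_max_left _ _)
            (mul_nonneg hgnn (Real.rpow_nonneg (by linarith) _))
        _ = max ((3:ℝ) ^ (lam + 1) * C) (M / m) * (wh t / (1 - t) ^ lam) * (1 - r) ^ lam := by
          ring
    · have h1 : wh r ≤ wh 0 := whmono 0 r le_rfl hr
      have h2 : ((1/2:ℝ)) ^ lam ≤ (1 - r) ^ lam :=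
        Real.rpow_le_rpow (by norm_num) (by linarith) hlam.le
      have hlhs : wh r / (1 - r) ^ lam ≤ M := by
        rw [hM]
        exact div_le_div₀ (whnn 0) h1 (Real.rpow_pos_of_pos (by norm_num) _) h2
      have hmle : m ≤ wh t / (1 - t) ^ lam := hgt_lb t (le_trans hr hrt) ht
      calc wh r / (1 - r) ^ lam ≤ M := hlhs
        _ = (M / m) * m := (div_mul_cancel₀ M hmpos.ne').symm
        _ ≤ (M / m) * (wh t / (1 - t) ^ lam) :=
          mul_le_mul_of_nonneg_left hmle (div_nonneg hMnn hmpos.le)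
        _ ≤ max ((3:ℝ) ^ (lam + 1) * C) (M / m) * (wh t / (1 - t) ^ lam) :=
          mul_le_mul_of_nonneg_right (le_max_right _ _) hgnn


theorem kernel_bound_to_essentially_increasing (ω : ℝ → ℝ) (hω : ∀ s, 0 ≤ ω s)
    (hint : IntegrableOn ω (Set.Ico (0:ℝ) 1))
    (lam C : ℝ) (hlam : 0 < lam) (hC : 0 < C)
    (h : ∀ ξ ∈ Metric.ball (0:ℂ) 1,
      (∫ z in Metric.ball (0:ℂ) 1,
          ω (‖z‖) / ‖1 - (starRingEnd ℂ) ξ * z‖ ^ (lam + 1)) ≤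
        C * ((∫ s in (‖ξ‖)..1, ω s) / (1 - ‖ξ‖) ^ lam)) :
    ∃ C' : ℝ, 0 < C' ∧ ∀ r t : ℝ, 0 ≤ r → r ≤ t → t < 1 →
      (∫ s in r..1, ω s) / (1 - r) ^ lam ≤ C' * ((∫ s in t..1, ω s) / (1 - t) ^ lam) := by
  have hsm := hint.1
  set ω' : ℝ → ℝ := fun s => max (hsm.mk ω s) 0 with hω'def
  have hmeas' : Measurable ω' := hsm.stronglyMeasurable_mk.measurable.max measurable_const
  have hω'nn : ∀ s, 0 ≤ ω' s := fun s => le_max_right _ _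
  have heq : ω =ᵐ[volume.restrict (Set.Ico (0:ℝ) 1)] ω' := by
    filter_upwards [hsm.ae_eq_mk] with s hs
    rw [hω'def]
    simp only
    rw [← hs, max_eq_left (hω s)]
  have hint' : IntegrableOn ω' (Set.Ico (0:ℝ) 1) := hint.congr heq
  have hnull : volume {s : ℝ | s ∈ Set.Ico (0:ℝ) 1 ∧ ω s ≠ ω' s} = 0 := by
    have h2 := heq
    rw [Filter.EventuallyEq, ae_iff, Measure.restrict_apply' measurableSet_Ico] at h2
    refine measure_mono_null ?_ h2
    intro s hs
    exact ⟨hs.2, hs.1⟩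
  have hballeq : ∀ᵐ z ∂(volume.restrict (Metric.ball (0:ℂ) 1)),
      ω (‖z‖) = ω' (‖z‖) := by
    rw [ae_iff, Measure.restrict_apply' measurableSet_ball]
    refine measure_mono_null ?_ (abs_preimage_null hnull)
    rintro z ⟨hne, hball⟩
    have hmem : ‖z‖ ∈ Set.Ico (0:ℝ) 1 := by
      refine ⟨norm_nonneg z, ?_⟩
      rw [Metric.mem_ball, dist_zero_right] at hball
      exact hball
    exact ⟨hmem, hne⟩
  have hiv : ∀ r : ℝ, 0 ≤ r → r ≤ 1 → (∫ s in r..1, ω s) = ∫ s in r..1, ω' s := by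
    intro r hr hr1
    rw [intervalIntegral.integral_of_le hr1, intervalIntegral.integral_of_le hr1,
      integral_Ioc_eq_integral_Ioo, integral_Ioc_eq_integral_Ioo]
    refine integral_congr_ae (ae_restrict_of_ae_restrict_of_subset ?_ heq)
    exact fun x hx => ⟨le_of_lt (lt_of_le_of_lt hr hx.1), hx.2⟩
  have h' : ∀ ξ ∈ Metric.ball (0:ℂ) 1,
      (∫ z in Metric.ball (0:ℂ) 1,
          ω' (‖z‖) / ‖1 - (starRingEnd ℂ) ξ * z‖ ^ (lam + 1)) ≤
        C * ((∫ s in (‖ξ‖)..1, ω' s) / (1 - ‖ξ‖) ^ lam) := by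
    intro ξ hξ
    have hξ1 : ‖ξ‖ < 1 := by
      rw [Metric.mem_ball, dist_zero_right] at hξ
      exact hξ
    rw [← hiv _ (norm_nonneg ξ) hξ1.le]
    refine le_trans (le_of_eq ?_) (h ξ hξ)
    refine integral_congr_ae ?_
    filter_upwards [hballeq] with z hz
    rw [hz]
  obtain ⟨C', hC'pos, hC'⟩ := core_thm ω' hmeas' hω'nn hint' lam C hlam hC h'
  refine ⟨C', hC'pos, fun r t hr hrt ht => ?_⟩
  rw [hiv r hr (by linarith), hiv t (le_trans hr hrt) ht.le]
  exact hC' r t hr hrt ht
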